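/- Let 1 ≤ j ≤ k-1, a the unique integer in [1,k-j] with a ≡ k mod (k-j), b = k-j-a, p = (1-ε)/(C(k-j,a)·C(n-j,k-j)) with ε ∈ (0,1) constant, and ℓ = (j·ln n + ω)/(-ln(1-ε)) with ω = ω(n) → ∞, ω = o(ln n). Then (n)_v · p^ℓ / (a!b!)^ℓ → 0 as n → ∞, where v = (k-j)ℓ + j. -/

import Mathlib

open Filter

lemma aux_pow16 (r : ℕ) : ∀ (l m : ℕ), m.descFactorial (r * l) ≤ (m.descFactorial r) ^ l := by
  intro l
  induction l with
  | zero => simp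
  | succ l ih =>
    intro m
    have h1 : r ≤ r * (l + 1) := Nat.le_mul_of_pos_right r (Nat.succ_pos l)
    have h2 := Nat.descFactorial_mul_descFactorial (n := m) h1
    have h3 : r * (l + 1) - r = r * l := by ring_nf; omega
    rw [h3] at h2
    calc m.descFactorial (r * (l+1)) = (m - r).descFactorial (r * l) * m.descFactorial r := h2.symm
      _ ≤ (m - r).descFactorial r ^ l * m.descFactorial r := Nat.mul_le_mul_right _ (ih _)
      _ ≤ m.descFactorial r ^ l * m.descFactorial r :=
          Nat.mul_le_mul_right _ (Nat.pow_le_pow_left (Nat.descFactorial_le _ (Nat.sub_le m r)) l)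
      _ = m.descFactorial r ^ (l + 1) := (pow_succ _ _).symm

lemma aux_split16 (n j m : ℕ) :
    n.descFactorial (m + j) = (n - j).descFactorial m * n.descFactorial j := by
  have := Nat.descFactorial_mul_descFactorial (n := n) (k := j) (m := m + j) (by omega)
  simpa using this.symm

/-- Subcritical first moment: with `1 ≤ j ≤ k-1`, `a` the unique integer in `[1, k-j]`
with `a ≡ k (mod k-j)`, `b = k-j-a`, `p = (1-ε)/(C(k-j,a)·C(n-j,k-j))` for a constant
`ε ∈ (0,1)`, and `ℓ = (j·ln n + ω)/(-ln(1-ε))` where `ω → ∞` and `ω = o(ln n)`, we have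
`(n)_v · p^ℓ / (a!b!)^ℓ → 0` as `n → ∞`, where `v = (k-j)ℓ + j`. -/
theorem stmt16 (k j a b : ℕ) (ε : ℝ)
    (hj : 1 ≤ j) (hjk : j ≤ k - 1)
    (ha1 : 1 ≤ a) (ha2 : a ≤ k - j) (ha3 : a % (k - j) = k % (k - j))
    (hb : b = k - j - a)
    (hε0 : 0 < ε) (hε1 : ε < 1)
    (ω : ℕ → ℝ) (hω : Tendsto ω atTop atTop)
    (hωo : ω =o[atTop] fun n : ℕ => Real.log n)
    (ℓ : ℕ → ℕ)
    (hℓ : ∀ n, ℓ n = ⌊((j : ℝ) * Real.log n + ω n) / (-Real.log (1 - ε))⌋₊)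
    (p : ℕ → ℝ)
    (hp : ∀ n, p n = (1 - ε) /
      ((Nat.choose (k - j) a : ℝ) * (Nat.choose (n - j) (k - j) : ℝ)))
    (v : ℕ → ℕ) (hv : ∀ n, v n = (k - j) * ℓ n + j) :
    Tendsto (fun n => (Nat.descFactorial n (v n) : ℝ) * p n ^ ℓ n /
        ((Nat.factorial a * Nat.factorial b : ℕ) : ℝ) ^ ℓ n) atTop (nhds 0) := by
  have hε' : (0 : ℝ) < 1 - ε := by linarith
  have hε'' : 1 - ε < 1 := by linarith
  have hL : 0 < -Real.log (1 - ε) := by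
    have := Real.log_neg hε' hε''
    linarith
  set L : ℝ := -Real.log (1 - ε) with hLdef
  -- key nat identity: a! * b! * C(k-j,a) = (k-j)!
  have hfact : a.factorial * b.factorial * (k - j).choose a = (k - j).factorial := by
    have := Nat.choose_mul_factorial_mul_factorial ha2
    rw [hb]
    rw [show (k - j).choose a * a.factorial * (k - j - a).factorial = a.factorial * (k-j-a).factorial * (k-j).choose a by ring] at this
    exact this
  -- the bounding function
  have hbound : ∀ᶠ n in atTop,
      (Nat.descFactorial n (v n) : ℝ) * p n ^ ℓ n /
        ((a.factorial * b.factorial : ℕ) : ℝ) ^ ℓ n ≤ (1 - ε)⁻¹ * Real.exp (-ω n) := by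
    filter_upwards [eventually_ge_atTop k, eventually_ge_atTop 1,
      hω.eventually_ge_atTop 0] with n hn hn1 hωn
    have hnj : k - j ≤ n - j := by omega
    -- M = (n-j) descFactorial (k-j) is positive
    have hMpos : 0 < (n - j).descFactorial (k - j) :=
      Nat.pos_of_ne_zero fun h => absurd (Nat.descFactorial_eq_zero_iff_lt.mp h) (by omega)
    set M : ℕ := (n - j).descFactorial (k - j) with hM
    have hMreal : ((a.factorial * b.factorial : ℕ) : ℝ) * (((k - j).choose a : ℝ) * ((n - j).choose (k - j) : ℝ))
        = (M : ℝ) := by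
      rw [hM, Nat.descFactorial_eq_factorial_mul_choose]
      push_cast [← hfact]
      ring
    have hMR : (0 : ℝ) < (M : ℝ) := by exact_mod_cast hMpos
    have hDen : (0 : ℝ) < ((k - j).choose a : ℝ) * ((n - j).choose (k - j) : ℝ) := by
      have h1 : 0 < (k - j).choose a := Nat.choose_pos ha2
      have h2 : 0 < (n - j).choose (k - j) := Nat.choose_pos hnj
      positivity
    have hFpos : (0 : ℝ) < ((a.factorial * b.factorial : ℕ) : ℝ) := by positivity
    -- rewrite the expression
    have hexp : (Nat.descFactorial n (v n) : ℝ) * p n ^ ℓ n / ((a.factorial * b.factorial : ℕ) : ℝ) ^ ℓ n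
        = (Nat.descFactorial n (v n) : ℝ) * (1 - ε) ^ ℓ n / (M : ℝ) ^ ℓ n := by
      have hc1 : ((k - j).choose a : ℝ) ≠ 0 := by
        exact_mod_cast (Nat.choose_pos ha2).ne'
      have hc2 : ((n - j).choose (k - j) : ℝ) ≠ 0 := by
        exact_mod_cast (Nat.choose_pos hnj).ne'
      have hf1 : (a.factorial : ℝ) ≠ 0 := by exact_mod_cast a.factorial_pos.ne'
      have hf2 : (b.factorial : ℝ) ≠ 0 := by exact_mod_cast b.factorial_pos.ne'
      rw [hp, ← hMreal]
      push_cast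
      field_simp
      rw [mul_assoc, ← mul_pow, show (1 - ε) / (((k - j).choose a : ℝ) * ((n - j).choose (k - j) : ℝ)) * (((k - j).choose a : ℝ) * ((n - j).choose (k - j) : ℝ) * (a.factorial : ℝ) * (b.factorial : ℝ)) = (1 - ε) * ((a.factorial : ℝ) * (b.factorial : ℝ)) by rw [div_mul_eq_mul_div, div_eq_iff (mul_ne_zero hc1 hc2)]; ring, mul_pow]
      ring
    rw [hexp]
    -- descFactorial bound
    have hdf : (Nat.descFactorial n (v n) : ℝ) ≤ (n : ℝ) ^ j * (M : ℝ) ^ ℓ n := by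
      have h1 : Nat.descFactorial n (v n) ≤ M ^ ℓ n * n ^ j := by
        rw [hv, aux_split16]
        exact Nat.mul_le_mul (aux_pow16 _ _ _) (Nat.descFactorial_le_pow _ _)
      calc (Nat.descFactorial n (v n) : ℝ) ≤ ((M ^ ℓ n * n ^ j : ℕ) : ℝ) := by exact_mod_cast h1
        _ = (n : ℝ) ^ j * (M : ℝ) ^ ℓ n := by push_cast; ring
    have step1 : (Nat.descFactorial n (v n) : ℝ) * (1 - ε) ^ ℓ n / (M : ℝ) ^ ℓ n
        ≤ (n : ℝ) ^ j * (1 - ε) ^ ℓ n := by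
      rw [div_le_iff₀ (by positivity)]
      calc (Nat.descFactorial n (v n) : ℝ) * (1 - ε) ^ ℓ n
          ≤ ((n : ℝ) ^ j * (M : ℝ) ^ ℓ n) * (1 - ε) ^ ℓ n :=
            mul_le_mul_of_nonneg_right hdf (by positivity)
        _ = (n : ℝ) ^ j * (1 - ε) ^ ℓ n * (M : ℝ) ^ ℓ n := by ring
    refine step1.trans ?_
    -- bound (1-ε)^ℓ
    have hlogn : 0 ≤ Real.log n := Real.log_natCast_nonneg n
    have hX : (0 : ℝ) ≤ (j : ℝ) * Real.log n + ω n := by positivity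
    have hfloor : ((j : ℝ) * Real.log n + ω n) / L - 1 < (ℓ n : ℝ) := by
      rw [hℓ]
      exact sub_lt_iff_lt_add.mpr (Nat.lt_floor_add_one _)
    have hpow : (1 - ε) ^ ℓ n ≤ Real.exp (-((j : ℝ) * Real.log n + ω n) + L) := by
      rw [← Real.exp_log hε', ← Real.exp_nat_mul]
      apply Real.exp_le_exp.mpr
      have hlog : Real.log (1 - ε) = -L := by rw [hLdef]; ring
      rw [hlog]
      have := mul_le_mul_of_nonneg_right hfloor.le hL.le
      calc (ℓ n : ℝ) * (-L) = -((ℓ n : ℝ) * L) := by ring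
        _ ≤ -((((j : ℝ) * Real.log n + ω n) / L - 1) * L) := by nlinarith
        _ = -((j : ℝ) * Real.log n + ω n) + L := by field_simp; ring
    calc (n : ℝ) ^ j * (1 - ε) ^ ℓ n
        ≤ (n : ℝ) ^ j * Real.exp (-((j : ℝ) * Real.log n + ω n) + L) :=
          mul_le_mul_of_nonneg_left hpow (by positivity)
      _ = (1 - ε)⁻¹ * Real.exp (-ω n) := by
          rw [show -((j : ℝ) * Real.log n + ω n) + L = -((j:ℝ) * Real.log n) + (-ω n + L) by ring,
            Real.exp_add, Real.exp_add]
          have hnpos : (0 : ℝ) < n := by exact_mod_cast hn1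
          have h1 : Real.exp (-((j : ℝ) * Real.log n)) = ((n : ℝ) ^ j)⁻¹ := by
            rw [Real.exp_neg, show (j : ℝ) * Real.log n = (j : ℕ) * Real.log n by norm_num,
              Real.exp_nat_mul, Real.exp_log hnpos]
          have h2 : Real.exp L = (1 - ε)⁻¹ := by
            rw [hLdef, Real.exp_neg, Real.exp_log hε']
          rw [h1, h2]
          field_simp
  have hnonneg : ∀ n, 0 ≤ (Nat.descFactorial n (v n) : ℝ) * p n ^ ℓ n /
      ((a.factorial * b.factorial : ℕ) : ℝ) ^ ℓ n := by
    intro n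
    have hpn : 0 ≤ p n := by
      rw [hp]
      positivity
    positivity
  have hlim : Tendsto (fun n => (1 - ε)⁻¹ * Real.exp (-ω n)) atTop (nhds 0) := by
    have : Tendsto (fun n => Real.exp (-ω n)) atTop (nhds 0) :=
      Real.tendsto_exp_atBot.comp (tendsto_neg_atBot_iff.mpr hω)
    simpa using this.const_mul ((1 - ε)⁻¹)
  exact tendsto_of_tendsto_of_tendsto_of_le_of_le' tendsto_const_nhds hlim
    (Eventually.of_forall hnonneg) hbound
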